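/- Let r ≥ 3 and let r = r₁ + ⋯ + r_l be any partition of r into positive integers. Then there exists a nonempty finite simple r-regular graph G such that for every vertex x of G, the subgraph of G induced on the neighborhood N(x) is isomorphic to the disjoint union of the complete graphs K_{r₁}, …, K_{r_l}; consequently, for every vertex x, the number of triangles of G containing x equals ∑_{i=1}^{l} C(r_i, 2) and the number of 4-cycles of G containing x equals ∑_{i=1}^{l} r_i·C(r_i − 1, 2). -/

import Mathlib

open SimpleGraph

/-- The number of `k`-cycles of `G` containing the vertex `x`: each such cycle subgraph
corresponds to exactly two closed walks at `x` that are cycles of length `k`. -/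
noncomputable def cycleCountAt {V : Type*} (G : SimpleGraph V) (x : V) (k : ℕ) : ℕ :=
  Nat.card {p : G.Walk x x // p.IsCycle ∧ p.length = k} / 2

/-- A graph is `r`-regular if every vertex has exactly `r` neighbors. -/
def IsRegularGraph {V : Type*} (G : SimpleGraph V) (r : ℕ) : Prop :=
  ∀ v : V, Nat.card (G.neighborSet v) = r

/-- The disjoint union of complete graphs `K_{rs 0}, …, K_{rs (l-1)}`: two vertices are
adjacent iff they are distinct and lie in the same component. -/
def cliquesGraph (l : ℕ) (rs : Fin l → ℕ) : SimpleGraph ((i : Fin l) × Fin (rs i)) :=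
  SimpleGraph.fromRel (fun a b => a.1 = b.1)


/- ### Auxiliary machinery -/


lemma cliquesGraph_adj {l : ℕ} {rs : Fin l → ℕ} (α β : (i : Fin l) × Fin (rs i)) :
    (cliquesGraph l rs).Adj α β ↔ α ≠ β ∧ α.1 = β.1 := by
  simp only [cliquesGraph, fromRel_adj]
  constructor
  · rintro ⟨h, h2 | h2⟩
    · exact ⟨h, h2⟩
    · exact ⟨h, h2.symm⟩
  · rintro ⟨h, h2⟩; exact ⟨h, Or.inl h2⟩

-- pairs equiv
def pairsEquiv (l : ℕ) (rs : Fin l → ℕ) :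
    {q : ((i : Fin l) × Fin (rs i)) × ((i : Fin l) × Fin (rs i)) //
        (cliquesGraph l rs).Adj q.1 q.2} ≃
      Σ i : Fin l, {q : Fin (rs i) × Fin (rs i) // q.1 ≠ q.2} where
  toFun q := ⟨q.1.1.1, (q.1.1.2, Fin.cast (congrArg rs ((cliquesGraph_adj _ _).mp q.2).2.symm) q.1.2.2),
    by
      have h := (cliquesGraph_adj _ _).mp q.2
      obtain ⟨⟨⟨i, s⟩, ⟨j, t⟩⟩, hq⟩ := q
      obtain ⟨hne, hfst⟩ := h
      dsimp at hfst ⊢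
      subst hfst
      simpa using fun h' => hne (by simp [h'])⟩
  invFun x := ⟨(⟨x.1, x.2.1.1⟩, ⟨x.1, x.2.1.2⟩), by
    rw [cliquesGraph_adj]
    exact ⟨by simpa using x.2.2, rfl⟩⟩
  left_inv := by
    rintro ⟨⟨⟨i, s⟩, ⟨j, t⟩⟩, hq⟩
    obtain ⟨hne, hfst⟩ := (cliquesGraph_adj _ _).mp hq
    dsimp at hfst
    subst hfst
    rfl
  right_inv := by rintro ⟨i, ⟨s, t⟩, h⟩; rfl

def nePairsEquiv (n : ℕ) : {q : Fin n × Fin n // q.1 ≠ q.2} ≃ Σ s : Fin n, {t : Fin n // t ≠ s} where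
  toFun q := ⟨q.1.1, q.1.2, fun h => q.2 h.symm⟩
  invFun x := ⟨(x.1, x.2.1), fun h => x.2.2 (by simpa using h.symm)⟩
  left_inv q := rfl
  right_inv x := rfl

lemma card_ne_pairs (n : ℕ) : Fintype.card {q : Fin n × Fin n // q.1 ≠ q.2} = n * (n - 1) := by
  rw [Fintype.card_congr (nePairsEquiv n), Fintype.card_sigma]
  simp [Fintype.card_subtype_compl]

def neTriplesEquiv (n : ℕ) :
    {q : Fin n × Fin n × Fin n // q.1 ≠ q.2.1 ∧ q.2.1 ≠ q.2.2 ∧ q.1 ≠ q.2.2} ≃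
      Σ s : Fin n, Σ t : {t : Fin n // t ≠ s}, {u : Fin n // ¬(u = s ∨ u = t.1)} where
  toFun q := ⟨q.1.1, ⟨q.1.2.1, fun h => q.2.1 h.symm⟩, q.1.2.2,
    fun h => h.elim (fun h' => q.2.2.2 h'.symm) (fun h' => q.2.2.1 h'.symm)⟩
  invFun x := ⟨(x.1, x.2.1.1, x.2.2.1),
    fun h => x.2.1.2 h.symm, fun h => x.2.2.2 (Or.inr h.symm), fun h => x.2.2.2 (Or.inl h.symm)⟩
  left_inv q := rfl
  right_inv x := rfl

lemma card_ne_triples (n : ℕ) :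
    Fintype.card {q : Fin n × Fin n × Fin n // q.1 ≠ q.2.1 ∧ q.2.1 ≠ q.2.2 ∧ q.1 ≠ q.2.2} =
      n * ((n - 1) * (n - 2)) := by
  rw [Fintype.card_congr (neTriplesEquiv n), Fintype.card_sigma]
  have : ∀ s : Fin n, ∀ t : {t : Fin n // t ≠ s},
      Fintype.card {u : Fin n // ¬(u = s ∨ u = t.1)} = n - 2 := by
    intro s t
    rw [Fintype.card_subtype_compl]
    have : Fintype.card {u : Fin n // u = s ∨ u = t.1} = 2 := by
      rw [Fintype.card_subtype]
      have : (Finset.univ.filter fun u : Fin n => u = s ∨ u = t.1) = {s, t.1} := by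
        ext u; simp
      rw [this, Finset.card_insert_of_notMem (by simpa using fun h => t.2 h.symm),
        Finset.card_singleton]
    rw [this, Fintype.card_fin]
  have step : ∀ s : Fin n,
      Fintype.card ((t : {t : Fin n // t ≠ s}) × {u : Fin n // ¬(u = s ∨ u = t.1)}) =
        (n - 1) * (n - 2) := by
    intro s
    rw [Fintype.card_sigma]
    calc ∑ t : {t : Fin n // t ≠ s}, Fintype.card {u : Fin n // ¬(u = s ∨ u = t.1)}
        = ∑ _t : {t : Fin n // t ≠ s}, (n - 2) :=
          Finset.sum_congr rfl fun t _ => this s t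
      _ = (n - 1) * (n - 2) := by
          simp [Finset.sum_const, Fintype.card_subtype_compl]
  calc ∑ s : Fin n, Fintype.card ((t : {t : Fin n // t ≠ s}) × {u : Fin n // ¬(u = s ∨ u = t.1)})
      = ∑ _s : Fin n, (n - 1) * (n - 2) := Finset.sum_congr rfl fun s _ => step s
    _ = n * ((n - 1) * (n - 2)) := by simp [Finset.sum_const, mul_comm]

variable {V : Type*} {G : SimpleGraph V} {x : V}

lemma walk3_shape (p : G.Walk x x) (hp : p.length = 3) :
    ∃ (a b : V) (h1 : G.Adj x a) (h2 : G.Adj a b) (h3 : G.Adj b x),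
      p = Walk.cons h1 (Walk.cons h2 (Walk.cons h3 Walk.nil)) := by
  cases p with
  | nil => simp at hp
  | cons h q =>
    cases q with
    | nil => simp at hp
    | cons h' q' =>
      cases q' with
      | nil => simp at hp
      | cons h'' q'' =>
        cases q'' with
        | nil => exact ⟨_, _, h, h', h'', rfl⟩
        | cons h''' q''' => simp [Walk.length_cons] at hp

lemma cycle3 (a b : V) (h1 : G.Adj x a) (h2 : G.Adj a b) (h3 : G.Adj b x) :
    (Walk.cons h1 (Walk.cons h2 (Walk.cons h3 Walk.nil))).IsCycle := by
  have hab : a ≠ b := h2.ne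
  have hxa : x ≠ a := h1.ne
  have hbx : b ≠ x := h3.ne
  rw [Walk.isCycle_def]
  refine ⟨?_, by simp, ?_⟩
  · rw [Walk.isTrail_def]
    simp [Walk.edges, List.Nodup, Sym2.eq, Sym2.rel_iff']
    aesop
  · simp [Walk.support]
    aesop

lemma card_cyc3 :
    Nat.card {p : G.Walk x x // p.IsCycle ∧ p.length = 3} =
      Nat.card {q : V × V // G.Adj x q.1 ∧ G.Adj q.1 q.2 ∧ G.Adj q.2 x} := by
  refine (Nat.card_eq_of_bijective
    (fun q => ⟨Walk.cons q.2.1 (Walk.cons q.2.2.1 (Walk.cons q.2.2.2 Walk.nil)),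
      cycle3 _ _ q.2.1 q.2.2.1 q.2.2.2, rfl⟩ :
      {q : V × V // G.Adj x q.1 ∧ G.Adj q.1 q.2 ∧ G.Adj q.2 x} →
        {p : G.Walk x x // p.IsCycle ∧ p.length = 3}) ⟨?_, ?_⟩).symm
  · rintro ⟨⟨a, b⟩, h⟩ ⟨⟨a', b'⟩, h'⟩ heq
    have hw := congrArg Subtype.val heq
    dsimp at hw
    have h1 := congrArg (fun p => p.getVert 1) hw
    have h2 := congrArg (fun p => p.getVert 2) hw
    simp [Walk.getVert] at h1 h2
    exact Subtype.ext (by simp [h1, h2])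
  · rintro ⟨p, hc, hl⟩
    obtain ⟨a, b, h1, h2, h3, rfl⟩ := walk3_shape p hl
    exact ⟨⟨(a, b), h1, h2, h3⟩, rfl⟩

variable {V : Type*} {G : SimpleGraph V} {x : V}

lemma walk4_shape (p : G.Walk x x) (hp : p.length = 4) :
    ∃ (a b c : V) (h1 : G.Adj x a) (h2 : G.Adj a b) (h3 : G.Adj b c) (h4 : G.Adj c x),
      p = Walk.cons h1 (Walk.cons h2 (Walk.cons h3 (Walk.cons h4 Walk.nil))) := by
  cases p with
  | nil => simp at hp
  | cons h q =>
    cases q with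
    | nil => simp at hp
    | cons h' q' =>
      cases q' with
      | nil => simp at hp
      | cons h'' q'' =>
        cases q'' with
        | nil => simp at hp
        | cons h''' q''' =>
          cases q''' with
          | nil => exact ⟨_, _, _, h, h', h'', h''', rfl⟩
          | cons h4 q4 => simp [Walk.length_cons] at hp

lemma cycle4 (a b c : V) (h1 : G.Adj x a) (h2 : G.Adj a b) (h3 : G.Adj b c) (h4 : G.Adj c x)
    (hac : a ≠ c) (hbx : b ≠ x) :
    (Walk.cons h1 (Walk.cons h2 (Walk.cons h3 (Walk.cons h4 Walk.nil)))).IsCycle := by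
  have hab : a ≠ b := h2.ne
  have hxa : x ≠ a := h1.ne
  have hbc : b ≠ c := h3.ne
  have hcx : c ≠ x := h4.ne
  rw [Walk.isCycle_def]
  refine ⟨?_, by simp, ?_⟩
  · rw [Walk.isTrail_def]
    simp [Walk.edges, List.Nodup, Sym2.eq, Sym2.rel_iff']
    aesop
  · simp [Walk.support]
    aesop

lemma card_cyc4 :
    Nat.card {p : G.Walk x x // p.IsCycle ∧ p.length = 4} =
      Nat.card {q : V × V × V // G.Adj x q.1 ∧ G.Adj q.1 q.2.1 ∧ G.Adj q.2.1 q.2.2 ∧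
        G.Adj q.2.2 x ∧ q.1 ≠ q.2.2 ∧ q.2.1 ≠ x} := by
  refine (Nat.card_eq_of_bijective
    (fun q => ⟨Walk.cons q.2.1 (Walk.cons q.2.2.1 (Walk.cons q.2.2.2.1
        (Walk.cons q.2.2.2.2.1 Walk.nil))),
      cycle4 _ _ _ q.2.1 q.2.2.1 q.2.2.2.1 q.2.2.2.2.1 q.2.2.2.2.2.1 q.2.2.2.2.2.2, by simp⟩ :
      _ → {p : G.Walk x x // p.IsCycle ∧ p.length = 4}) ⟨?_, ?_⟩).symm
  · rintro ⟨⟨a, b, c⟩, h⟩ ⟨⟨a', b', c'⟩, h'⟩ heq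
    have hw := congrArg Subtype.val heq
    dsimp at hw
    have h1 := congrArg (fun p => p.getVert 1) hw
    have h2 := congrArg (fun p => p.getVert 2) hw
    have h3 := congrArg (fun p => p.getVert 3) hw
    simp [Walk.getVert] at h1 h2 h3
    exact Subtype.ext (by simp [h1, h2, h3])
  · rintro ⟨p, hc, hl⟩
    obtain ⟨a, b, c, h1, h2, h3, h4, rfl⟩ := walk4_shape p hl
    have hnodup := hc.2
    simp [Walk.support, List.Nodup] at hnodup
    refine ⟨⟨(a, b, c), h1, h2, h3, h4, ?_, ?_⟩, rfl⟩
    · exact hnodup.1.2.1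
    · exact hnodup.2.1.2

variable {V : Type*} {G : SimpleGraph V} {x : V} {l : ℕ} {rs : Fin l → ℕ}

def triEquivN (x : V) :
    {q : V × V // G.Adj x q.1 ∧ G.Adj q.1 q.2 ∧ G.Adj q.2 x} ≃
      {q : G.neighborSet x × G.neighborSet x //
        (SimpleGraph.induce (G.neighborSet x) G).Adj q.1 q.2} where
  toFun q := ⟨(⟨q.1.1, q.2.1⟩, ⟨q.1.2, q.2.2.2.symm⟩), by
    simpa using q.2.2.1⟩
  invFun q := ⟨(q.1.1.1, q.1.2.1), q.1.1.2, by simpa using q.2, (q.1.2.2 : G.Adj x _).symm⟩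
  left_inv q := rfl
  right_inv q := rfl

def quadEquivN (x : V) :
    {q : V × V × V // G.Adj x q.1 ∧ G.Adj x q.2.1 ∧ G.Adj x q.2.2 ∧
        G.Adj q.1 q.2.1 ∧ G.Adj q.2.1 q.2.2 ∧ G.Adj q.1 q.2.2} ≃
      {q : G.neighborSet x × G.neighborSet x × G.neighborSet x //
        (SimpleGraph.induce (G.neighborSet x) G).Adj q.1 q.2.1 ∧
        (SimpleGraph.induce (G.neighborSet x) G).Adj q.2.1 q.2.2 ∧
        (SimpleGraph.induce (G.neighborSet x) G).Adj q.1 q.2.2} where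
  toFun q := ⟨(⟨q.1.1, q.2.1⟩, ⟨q.1.2.1, q.2.2.1⟩, ⟨q.1.2.2, q.2.2.2.1⟩), by
    refine ⟨by simpa using q.2.2.2.2.1, by simpa using q.2.2.2.2.2.1, by simpa using q.2.2.2.2.2.2⟩⟩
  invFun q := ⟨(q.1.1.1, q.1.2.1.1, q.1.2.2.1), q.1.1.2, q.1.2.1.2, q.1.2.2.2,
    by simpa using q.2.1, by simpa using q.2.2.1, by simpa using q.2.2.2⟩
  left_inv q := rfl
  right_inv q := rfl

def triplesEquiv (l : ℕ) (rs : Fin l → ℕ) :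
    {q : ((i : Fin l) × Fin (rs i)) × ((i : Fin l) × Fin (rs i)) × ((i : Fin l) × Fin (rs i)) //
        (cliquesGraph l rs).Adj q.1 q.2.1 ∧ (cliquesGraph l rs).Adj q.2.1 q.2.2 ∧
          (cliquesGraph l rs).Adj q.1 q.2.2} ≃
      Σ i : Fin l, {q : Fin (rs i) × Fin (rs i) × Fin (rs i) //
        q.1 ≠ q.2.1 ∧ q.2.1 ≠ q.2.2 ∧ q.1 ≠ q.2.2} where
  toFun q := ⟨q.1.1.1,
    (q.1.1.2,
     Fin.cast (congrArg rs ((cliquesGraph_adj _ _).mp q.2.1).2.symm) q.1.2.1.2,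
     Fin.cast (congrArg rs ((cliquesGraph_adj _ _).mp q.2.2.2).2.symm) q.1.2.2.2),
    by
      obtain ⟨⟨⟨i, s⟩, ⟨j, t⟩, ⟨k, u⟩⟩, h1, h2, h3⟩ := q
      obtain ⟨hne1, hf1⟩ := (cliquesGraph_adj _ _).mp h1
      obtain ⟨hne2, hf2⟩ := (cliquesGraph_adj _ _).mp h2
      obtain ⟨hne3, hf3⟩ := (cliquesGraph_adj _ _).mp h3
      dsimp at hf1 hf2 hf3 ⊢
      subst hf1; subst hf2
      refine ⟨fun h' => hne1 (by simpa using h'), fun h' => hne2 (by simpa using h'),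
        fun h' => hne3 (by simpa using h')⟩⟩
  invFun x := ⟨(⟨x.1, x.2.1.1⟩, ⟨x.1, x.2.1.2.1⟩, ⟨x.1, x.2.1.2.2⟩), by
    refine ⟨?_, ?_, ?_⟩ <;> rw [cliquesGraph_adj]
    · exact ⟨by simpa using x.2.2.1, rfl⟩
    · exact ⟨by simpa using x.2.2.2.1, rfl⟩
    · exact ⟨by simpa using x.2.2.2.2, rfl⟩⟩
  left_inv := by
    rintro ⟨⟨⟨i, s⟩, ⟨j, t⟩, ⟨k, u⟩⟩, h1, h2, h3⟩
    obtain ⟨hne1, hf1⟩ := (cliquesGraph_adj _ _).mp h1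
    obtain ⟨hne2, hf2⟩ := (cliquesGraph_adj _ _).mp h2
    dsimp at hf1 hf2
    subst hf1; subst hf2
    rfl
  right_inv := by rintro ⟨i, ⟨s, t, u⟩, h⟩; rfl

lemma two_mul_choose_two (n : ℕ) : 2 * n.choose 2 = n * (n - 1) := by
  rw [Nat.choose_two_right, Nat.mul_div_cancel' (Nat.even_mul_pred_self n).two_dvd]

def LocallyClique {V : Type*} (G : SimpleGraph V) : Prop :=
  ∀ ⦃x a b c : V⦄, G.Adj x a → G.Adj x c → G.Adj a b → G.Adj b c → b ≠ x → a ≠ c →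
    (G.Adj a c ∧ G.Adj x b)

lemma reg_of_iso (e : SimpleGraph.induce (G.neighborSet x) G ≃g cliquesGraph l rs) :
    Nat.card (G.neighborSet x) = ∑ i, rs i := by
  rw [Nat.card_congr e.toEquiv, Nat.card_eq_fintype_card, Fintype.card_sigma]
  simp

lemma tri_count (e : SimpleGraph.induce (G.neighborSet x) G ≃g cliquesGraph l rs) :
    cycleCountAt G x 3 = ∑ i, (rs i).choose 2 := by
  have key : Nat.card {q : V × V // G.Adj x q.1 ∧ G.Adj q.1 q.2 ∧ G.Adj q.2 x} =
      ∑ i, rs i * (rs i - 1) := by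
    rw [Nat.card_congr ((triEquivN x).trans ((Equiv.subtypeEquiv
        (e.toEquiv.prodCongr e.toEquiv) (fun q => by
          exact e.map_rel_iff.symm)).trans (pairsEquiv l rs)))]
    rw [Nat.card_eq_fintype_card, Fintype.card_sigma]
    exact Finset.sum_congr rfl fun i _ => card_ne_pairs (rs i)
  rw [cycleCountAt, card_cyc3, key]
  have : ∑ i, rs i * (rs i - 1) = 2 * ∑ i, (rs i).choose 2 := by
    rw [Finset.mul_sum]
    exact Finset.sum_congr rfl fun i _ => (two_mul_choose_two (rs i)).symm
  rw [this, Nat.mul_div_cancel_left _ (by norm_num)]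

lemma quad_count (hP3 : LocallyClique G)
    (e : SimpleGraph.induce (G.neighborSet x) G ≃g cliquesGraph l rs) :
    cycleCountAt G x 4 = ∑ i, rs i * (rs i - 1).choose 2 := by
  have conv : ∀ q : V × V × V,
      (G.Adj x q.1 ∧ G.Adj q.1 q.2.1 ∧ G.Adj q.2.1 q.2.2 ∧ G.Adj q.2.2 x ∧
        q.1 ≠ q.2.2 ∧ q.2.1 ≠ x) ↔
      (G.Adj x q.1 ∧ G.Adj x q.2.1 ∧ G.Adj x q.2.2 ∧
        G.Adj q.1 q.2.1 ∧ G.Adj q.2.1 q.2.2 ∧ G.Adj q.1 q.2.2) := by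
    rintro ⟨a, b, c⟩
    constructor
    · rintro ⟨h1, h2, h3, h4, hac, hbx⟩
      obtain ⟨hAC, hXB⟩ := hP3 h1 h4.symm h2 h3 hbx hac
      exact ⟨h1, hXB, h4.symm, h2, h3, hAC⟩
    · rintro ⟨h1, h2, h3, h4, h5, h6⟩
      exact ⟨h1, h4, h5, h3.symm, h6.ne, h2.ne'⟩
  have key : Nat.card {q : V × V × V // G.Adj x q.1 ∧ G.Adj q.1 q.2.1 ∧ G.Adj q.2.1 q.2.2 ∧
      G.Adj q.2.2 x ∧ q.1 ≠ q.2.2 ∧ q.2.1 ≠ x} = ∑ i, rs i * ((rs i - 1) * (rs i - 2)) := by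
    rw [Nat.card_congr (((Equiv.subtypeEquivRight conv).trans (quadEquivN x)).trans
        ((Equiv.subtypeEquiv (e.toEquiv.prodCongr (e.toEquiv.prodCongr e.toEquiv)) (fun q => by
          exact and_congr e.map_rel_iff.symm (and_congr e.map_rel_iff.symm
            e.map_rel_iff.symm))).trans (triplesEquiv l rs)))]
    rw [Nat.card_eq_fintype_card, Fintype.card_sigma]
    exact Finset.sum_congr rfl fun i _ => card_ne_triples (rs i)
  rw [cycleCountAt, card_cyc4, key]
  have : ∑ i, rs i * ((rs i - 1) * (rs i - 2)) = 2 * ∑ i, rs i * (rs i - 1).choose 2 := by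
    rw [Finset.mul_sum]
    refine Finset.sum_congr rfl fun i _ => ?_
    calc rs i * ((rs i - 1) * (rs i - 2))
        = rs i * ((rs i - 1) * (rs i - 1 - 1)) := by rw [Nat.sub_sub]
      _ = rs i * (2 * (rs i - 1).choose 2) := by rw [two_mul_choose_two]
      _ = 2 * (rs i * (rs i - 1).choose 2) := by ring
  rw [this, Nat.mul_div_cancel_left _ (by norm_num)]

def etaEquiv {l : ℕ} (rs : Fin (l + 1) → ℕ) :
    ((Σ i : Fin l, Fin (rs i.succ)) ⊕ Fin (rs 0)) ≃ Σ i : Fin (l + 1), Fin (rs i) where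
  toFun := Sum.elim (fun P => ⟨P.1.succ, P.2⟩) (fun s => ⟨0, s⟩)
  invFun X := Fin.cases (motive := fun j => Fin (rs j) →
      ((Σ i : Fin l, Fin (rs i.succ)) ⊕ Fin (rs 0)))
    (fun s => Sum.inr s) (fun i s => Sum.inl ⟨i, s⟩) X.1 X.2
  left_inv := by rintro (⟨i, s⟩ | s) <;> simp
  right_inv := by
    rintro ⟨j, s⟩
    induction j using Fin.cases <;> simp

lemma eta_inl_inl {l : ℕ} {rs : Fin (l + 1) → ℕ} (P Q : Σ i : Fin l, Fin (rs i.succ)) :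
    (cliquesGraph (l + 1) rs).Adj (etaEquiv rs (.inl P)) (etaEquiv rs (.inl Q)) ↔
      (cliquesGraph l (fun i => rs i.succ)).Adj P Q := by
  obtain ⟨i, s⟩ := P; obtain ⟨j, t⟩ := Q
  simp only [etaEquiv, Equiv.coe_fn_mk, Sum.elim_inl, cliquesGraph_adj, ne_eq, Sigma.ext_iff, Fin.succ_inj]
  try tauto

lemma eta_inl_inr {l : ℕ} {rs : Fin (l + 1) → ℕ} (P : Σ i : Fin l, Fin (rs i.succ))
    (s : Fin (rs 0)) :
    ¬ (cliquesGraph (l + 1) rs).Adj (etaEquiv rs (.inl P)) (etaEquiv rs (.inr s)) := by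
  obtain ⟨i, u⟩ := P
  simp only [etaEquiv, Equiv.coe_fn_mk, Sum.elim_inl, Sum.elim_inr, cliquesGraph_adj]
  rintro ⟨-, h⟩
  exact Fin.succ_ne_zero i h

lemma eta_inr_inr {l : ℕ} {rs : Fin (l + 1) → ℕ} (s t : Fin (rs 0)) :
    (cliquesGraph (l + 1) rs).Adj (etaEquiv rs (.inr s)) (etaEquiv rs (.inr t)) ↔ s ≠ t := by
  simp only [etaEquiv, Equiv.coe_fn_mk, Sum.elim_inr, cliquesGraph_adj, ne_eq, Sigma.ext_iff, heq_eq_eq]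
  try tauto

def stepGraph {V' : Type} (G' : SimpleGraph V') (m p : ℕ) (φ : V' → ZMod p) :
    SimpleGraph (V' × ZMod p × ZMod m) where
  Adj z w := (z.2.2 = w.2.2 ∧ z.2.1 = w.2.1 ∧ G'.Adj z.1 w.1) ∨
    (z.2.2 ≠ w.2.2 ∧ z.1 = w.1 ∧
      z.2.1 - (z.2.2.val : ZMod p) * φ z.1 = w.2.1 - (w.2.2.val : ZMod p) * φ w.1)
  symm := ⟨by
    rintro z w (⟨h1, h2, h3⟩ | ⟨h1, h2, h3⟩)
    · exact Or.inl ⟨h1.symm, h2.symm, h3.symm⟩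
    · exact Or.inr ⟨h1.symm, h2.symm, h3.symm⟩⟩
  loopless := ⟨by
    rintro z (⟨h1, h2, h3⟩ | ⟨h1, h2, h3⟩)
    · exact G'.loopless.irrefl _ h3
    · exact h1 rfl⟩

section Step

variable {V' : Type} {G' : SimpleGraph V'} {m p : ℕ} [NeZero m] [Fact p.Prime]
  {φ : V' → ZMod p}

lemma cast_val_injective (hmp : m ≤ p) {u t : ZMod m} (h : u ≠ t) :
    (u.val : ZMod p) ≠ (t.val : ZMod p) := by
  intro he
  apply h
  have h1 : u.val < p := lt_of_lt_of_le (ZMod.val_lt u) hmp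
  have h2 : t.val < p := lt_of_lt_of_le (ZMod.val_lt t) hmp
  have e1 := congrArg ZMod.val he
  rw [ZMod.val_cast_of_lt h1, ZMod.val_cast_of_lt h2] at e1
  exact ZMod.val_injective _ e1

lemma no_mixed (hmp : m ≤ p) (hφ : Function.Injective φ) {v w : V'} (hvw : v ≠ w)
    {t u : ZMod m} (htu : t ≠ u) :
    ((t.val : ZMod p) - (u.val : ZMod p)) * (φ v - φ w) ≠ 0 :=
  mul_ne_zero (sub_ne_zero.2 (cast_val_injective hmp htu)) (sub_ne_zero.2 fun h => hvw (hφ h))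

lemma step_locallyClique (hmp : m ≤ p) (hφ : Function.Injective φ)
    (hP3 : LocallyClique G') : LocallyClique (stepGraph G' m p φ) := by
  rintro ⟨x1, x2, x3⟩ ⟨a1, a2, a3⟩ ⟨b1, b2, b3⟩ ⟨c1, c2, c3⟩ h1 h2 h3 h4 hbx hac
  rcases h1 with ⟨e11, e12, e13⟩ | ⟨e11, e12, e13⟩ <;>
    rcases h2 with ⟨e21, e22, e23⟩ | ⟨e21, e22, e23⟩ <;>
      rcases h3 with ⟨e31, e32, e33⟩ | ⟨e31, e32, e33⟩ <;>
        rcases h4 with ⟨e41, e42, e43⟩ | ⟨e41, e42, e43⟩ <;>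
          dsimp only at *
  all_goals subst_vars
  all_goals try simp_all
  -- LLLL
  · obtain ⟨hAC, hXB⟩ := hP3 e13 e23 e33 e43 hbx hac
    exact ⟨Or.inl ⟨rfl, rfl, hAC⟩, Or.inl ⟨rfl, rfl, hXB⟩⟩
  -- L C C L : mixed square, impossible
  · exfalso
    refine absurd ?_ (no_mixed hmp hφ e43.ne e31)
    simp only [ZMod.natCast_val]
    linear_combination e23 - e33
  -- C L L C : mixed square, impossible
  · exfalso
    refine absurd ?_ (no_mixed hmp hφ e33.ne e11)
    simp only [ZMod.natCast_val]
    linear_combination - e13 - e43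
  -- CCCC : all four in one clique
  · have hAC3 : a3 ≠ c3 := fun h => hac (by rw [h] at e33; exact sub_left_inj.mp e33) h
    have hBX3 : b3 ≠ x3 := fun h => hbx (by
      have exb := e13.trans e43.symm
      rw [h] at exb
      exact (sub_left_inj.mp exb).symm) h
    refine ⟨Or.inr ⟨hAC3, rfl, ?_⟩, Or.inr ⟨fun h => hBX3 h.symm, rfl, ?_⟩⟩
    · simpa only [ZMod.natCast_val] using e33
    · simpa only [ZMod.natCast_val] using e13.trans e43.symm



section Nbhd

variable {V' : Type} {G' : SimpleGraph V'} {m p : ℕ} [NeZero m] [Fact p.Prime]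
  {φ : V' → ZMod p} (x : V' × ZMod p × ZMod m)

lemma layer_mem {y : V' × ZMod p × ZMod m} (hy : (stepGraph G' m p φ).Adj x y)
    (h : y.2.2 = x.2.2) : y.2.1 = x.2.1 ∧ G'.Adj x.1 y.1 := by
  rcases hy with ⟨h1, h2, h3⟩ | ⟨h1, h2, h3⟩
  · exact ⟨h2.symm, h3⟩
  · exact absurd h.symm h1

lemma clique_mem {y : V' × ZMod p × ZMod m} (hy : (stepGraph G' m p φ).Adj x y)
    (h : y.2.2 ≠ x.2.2) :
    y.1 = x.1 ∧ y.2.1 = x.2.1 + ((y.2.2.val : ZMod p) - (x.2.2.val : ZMod p)) * φ x.1 := by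
  rcases hy with ⟨h1, h2, h3⟩ | ⟨h1, h2, h3⟩
  · exact absurd h1.symm h
  · rw [← h2] at h3
    exact ⟨h2.symm, by linear_combination -h3⟩

/-- The other vertex of the clique through `x` in layer `u`. -/
def clv (u : ZMod m) : V' × ZMod p × ZMod m :=
  (x.1, x.2.1 + ((u.val : ZMod p) - (x.2.2.val : ZMod p)) * φ x.1, u)

lemma adj_clv {u : ZMod m} (h : u ≠ x.2.2) : (stepGraph G' m p φ).Adj x (clv (φ := φ) x u) :=
  Or.inr ⟨fun hh => h hh.symm, rfl, by simp only [clv]; ring⟩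

lemma adj_layer {w : V'} (hw : G'.Adj x.1 w) :
    (stepGraph G' m p φ).Adj x (w, x.2.1, x.2.2) :=
  Or.inl ⟨rfl, rfl, hw⟩

def stepNbrEquiv : ((stepGraph G' m p φ).neighborSet x) ≃
    (G'.neighborSet x.1 ⊕ {u : ZMod m // u ≠ x.2.2}) where
  toFun y := if h : y.1.2.2 = x.2.2 then .inl ⟨y.1.1, (layer_mem x y.2 h).2⟩
    else .inr ⟨y.1.2.2, h⟩
  invFun := Sum.elim (fun w => ⟨(w.1, x.2.1, x.2.2), adj_layer x w.2⟩)
    (fun u => ⟨clv x u.1, adj_clv x u.2⟩)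
  left_inv := by
    rintro ⟨⟨y1, y2, y3⟩, hy⟩
    by_cases h : y3 = x.2.2
    · obtain ⟨hA, hB⟩ := layer_mem x hy h
      simp only [h, dif_pos, Sum.elim_inl]
      exact Subtype.ext (by simp only at hA ⊢; rw [← hA, ← h])
    · obtain ⟨hA, hB⟩ := clique_mem x hy h
      simp only [dif_neg h, Sum.elim_inr]
      refine Subtype.ext ?_
      simp only at hA hB
      simp only [clv, Prod.mk.injEq]
      exact ⟨hA.symm, hB.symm, trivial⟩
  right_inv := by
    rintro (⟨w, hw⟩ | ⟨u, hu⟩)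
    · simp only [Sum.elim_inl]
      simp
    · simp only [Sum.elim_inr, clv]
      simp [hu]

end Nbhd

section Iso

variable {V' : Type} {G' : SimpleGraph V'} {m p : ℕ} [NeZero m] [Fact p.Prime]
  {φ : V' → ZMod p} (x : V' × ZMod p × ZMod m)

lemma stepNbrEquiv_eq_inl (y : ((stepGraph G' m p φ).neighborSet x)) (h : y.1.2.2 = x.2.2) :
    stepNbrEquiv x y = Sum.inl ⟨y.1.1, (layer_mem x y.2 h).2⟩ := by
  simp only [stepNbrEquiv, Equiv.coe_fn_mk]
  exact dif_pos h

lemma stepNbrEquiv_eq_inr (y : ((stepGraph G' m p φ).neighborSet x)) (h : ¬ y.1.2.2 = x.2.2) :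
    stepNbrEquiv x y = Sum.inr ⟨y.1.2.2, h⟩ := by
  simp only [stepNbrEquiv, Equiv.coe_fn_mk]
  exact dif_neg h

noncomputable def stepIso {l : ℕ} (rs : Fin (l + 1) → ℕ)
    (e' : SimpleGraph.induce (G'.neighborSet x.1) G' ≃g cliquesGraph l (fun i => rs i.succ))
    (κ : {u : ZMod m // u ≠ x.2.2} ≃ Fin (rs 0)) :
    SimpleGraph.induce ((stepGraph G' m p φ).neighborSet x) (stepGraph G' m p φ) ≃g
      cliquesGraph (l + 1) rs where
  toEquiv := (stepNbrEquiv x).trans ((e'.toEquiv.sumCongr κ).trans (etaEquiv rs))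
  map_rel_iff' := by
    intro y z
    simp only [Equiv.trans_apply]
    by_cases hy : y.1.2.2 = x.2.2 <;> by_cases hz : z.1.2.2 = x.2.2
    · rw [stepNbrEquiv_eq_inl x y hy, stepNbrEquiv_eq_inl x z hz]
      simp only [Equiv.sumCongr_apply, Sum.map_inl]
      rw [eta_inl_inl]
      have hy' := layer_mem x y.2 hy
      have hz' := layer_mem x z.2 hz
      refine Iff.trans e'.map_rel_iff ?_
      constructor
      · intro h
        exact Or.inl ⟨hy.trans hz.symm, hy'.1.trans hz'.1.symm, h⟩
      · rintro (⟨h1, h2, h3⟩ | ⟨h1, h2, h3⟩)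
        · exact h3
        · exact absurd (hy.trans hz.symm) h1
    · rw [stepNbrEquiv_eq_inl x y hy, stepNbrEquiv_eq_inr x z hz]
      simp only [Equiv.sumCongr_apply, Sum.map_inl, Sum.map_inr]
      refine iff_of_false (eta_inl_inr _ _) ?_
      rintro (⟨h1, h2, h3⟩ | ⟨h1, h2, h3⟩)
      · exact hz (h1.symm.trans hy)
      · exact ((layer_mem x y.2 hy).2).ne (h2.trans (clique_mem x z.2 hz).1).symm
    · rw [stepNbrEquiv_eq_inr x y hy, stepNbrEquiv_eq_inl x z hz]
      simp only [Equiv.sumCongr_apply, Sum.map_inl, Sum.map_inr]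
      refine iff_of_false (fun h => eta_inl_inr _ _ h.symm) ?_
      rintro (⟨h1, h2, h3⟩ | ⟨h1, h2, h3⟩)
      · exact hy (h1.trans hz)
      · exact ((layer_mem x z.2 hz).2).ne ((clique_mem x y.2 hy).1.symm.trans h2)
    · rw [stepNbrEquiv_eq_inr x y hy, stepNbrEquiv_eq_inr x z hz]
      simp only [Equiv.sumCongr_apply, Sum.map_inr]
      rw [eta_inr_inr]
      have hy' := clique_mem x y.2 hy
      have hz' := clique_mem x z.2 hz
      rw [ne_eq, Equiv.apply_eq_iff_eq, Subtype.mk.injEq]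
      constructor
      · intro hne
        refine Or.inr ⟨hne, hy'.1.trans hz'.1.symm, ?_⟩
        simp only [Function.Embedding.coe_subtype]
        rw [hy'.2, hz'.2, hy'.1, hz'.1]
        ring
      · rintro (⟨h1, h2, h3⟩ | ⟨h1, h2, h3⟩)
        · simp only [Function.Embedding.coe_subtype] at h3
          rw [hy'.1, hz'.1] at h3
          exact absurd h3 (G'.loopless.irrefl _)
        · exact h1

end Iso

lemma key_exists (l : ℕ) (rs : Fin l → ℕ) :
    ∃ (V : Type) (G : SimpleGraph V), Finite V ∧ Nonempty V ∧ LocallyClique G ∧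
      ∀ x : V, Nonempty (SimpleGraph.induce (G.neighborSet x) G ≃g cliquesGraph l rs) := by
  induction l with
  | zero =>
    refine ⟨PUnit, ⊥, inferInstance, ⟨PUnit.unit⟩, ?_, ?_⟩
    · rintro x a b c h
      exact h.elim
    · intro x
      haveI hempty : IsEmpty ((⊥ : SimpleGraph PUnit).neighborSet x) := ⟨fun y => y.2⟩
      exact ⟨⟨Equiv.equivOfIsEmpty _ _, fun {a b} => isEmptyElim a⟩⟩
  | succ l ih =>
    obtain ⟨V', G', hfin, hne, hP3, hiso⟩ := ih (fun i => rs i.succ)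
    haveI := hfin
    haveI := hne
    haveI : Fintype V' := Fintype.ofFinite V'
    set m := rs 0 + 1 with hm
    haveI : NeZero m := ⟨Nat.succ_ne_zero _⟩
    obtain ⟨p, hp, pp⟩ := Nat.exists_infinite_primes (max m (Fintype.card V'))
    haveI : Fact p.Prime := ⟨pp⟩
    haveI : NeZero p := ⟨pp.pos.ne'⟩
    have hmp : m ≤ p := le_trans (le_max_left _ _) hp
    have hcard : Fintype.card V' ≤ Fintype.card (ZMod p) := by
      rw [ZMod.card]
      exact le_trans (le_max_right _ _) hp
    obtain ⟨φemb⟩ := Function.Embedding.nonempty_of_card_le hcard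
    refine ⟨V' × ZMod p × ZMod m, stepGraph G' m p φemb, inferInstance, inferInstance,
      step_locallyClique hmp φemb.injective hP3, ?_⟩
    intro x
    obtain ⟨e'⟩ := hiso x.1
    have hκ : Fintype.card {u : ZMod m // u ≠ x.2.2} = rs 0 := by
      rw [Fintype.card_subtype_compl, Fintype.card_subtype_eq, ZMod.card]
      omega
    exact ⟨stepIso x rs e' (Fintype.equivFinOfCardEq hκ)⟩

/-- For every `r ≥ 3` and every partition `r = r₁ + ⋯ + r_l` into positive integers, there is a
nonempty finite simple `r`-regular graph `G` such that for every vertex `x` the subgraph induced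
on the neighborhood of `x` is isomorphic to the disjoint union `K_{r₁} ⊔ ⋯ ⊔ K_{r_l}`;
consequently every vertex lies on exactly `∑ C(r_i, 2)` triangles and exactly
`∑ r_i·C(r_i − 1, 2)` four-cycles. -/
theorem exists_regular_graph_with_clique_neighborhoods
    (r l : ℕ) (hr : 3 ≤ r) (rs : Fin l → ℕ) (hpos : ∀ i, 1 ≤ rs i)
    (hsum : ∑ i, rs i = r) :
    ∃ (V : Type) (G : SimpleGraph V), Finite V ∧ Nonempty V ∧ IsRegularGraph G r ∧
      (∀ x : V, Nonempty ((SimpleGraph.induce (G.neighborSet x) G) ≃g cliquesGraph l rs)) ∧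
      (∀ x : V, cycleCountAt G x 3 = ∑ i, (rs i).choose 2) ∧
      (∀ x : V, cycleCountAt G x 4 = ∑ i, rs i * (rs i - 1).choose 2) := by
  obtain ⟨V, G, hfin, hne, hP3, hiso⟩ := key_exists l rs
  refine ⟨V, G, hfin, hne, ?_, hiso, ?_, ?_⟩
  · intro v
    obtain ⟨e⟩ := hiso v
    rw [reg_of_iso e, hsum]
  · intro x
    obtain ⟨e⟩ := hiso x
    exact tri_count e
  · intro x
    obtain ⟨e⟩ := hiso x
    exact quad_count hP3 e
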